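/- Let n ≥ 1 and let A be the real n×n matrix with entries A₁₁ = a11, A₁ⱼ = a_{1j} for j ≥ 2, Aᵢ₁ = a_{i1} and Aᵢᵢ = a_{ii} for i ≥ 2, and all other entries zero. Let A_d be the (n+1)×(n+1) matrix whose upper-left n×n block has first row (a11, a12, …, a1n), diagonal entries a22, …, ann in rows 2 through n (with zeros elsewhere in those rows), whose last column is (0, a21, a31, …, an1, -α)ᵀ, and whose last row is (α, 0, …, 0, -α). Then for every complex λ, det(A_d - λI) = -(α·det(A - λI) + λ·∏ᵢ₌₁ⁿ (aᵢᵢ - λ)). -/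

import Mathlib

/-- Equiv splitting `Fin (m+1)` as core indices `1..m` plus the border index `0`. -/
def stmt8e1 (m : ℕ) : Fin m ⊕ Fin 1 ≃ Fin (m+1) where
  toFun x := match x with
    | .inl j => ⟨(j : ℕ) + 1, by omega⟩
    | .inr _ => ⟨0, by omega⟩
  invFun i := if h : (i : ℕ) = 0 then .inr 0 else .inl ⟨(i : ℕ) - 1, by omega⟩
  left_inv x := by
    rcases x with j | r
    · dsimp only
      rw [dif_neg (by omega)]
      congr 1
    · dsimp only
      rw [dif_pos rfl]
      congr 1
      exact Subsingleton.elim _ _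
  right_inv i := by
    rcases i with ⟨iv, hiv⟩
    dsimp only
    by_cases h : iv = 0
    · subst h
      rw [dif_pos rfl]
    · rw [dif_neg h]
      exact Fin.ext (by simp; omega)

/-- Equiv splitting `Fin (m+2)` as core indices `1..m` plus the borders `0` and `m+1`. -/
def stmt8e2 (m : ℕ) : Fin m ⊕ Fin 2 ≃ Fin (m+2) where
  toFun x := match x with
    | .inl j => ⟨(j : ℕ) + 1, by omega⟩
    | .inr ⟨0, _⟩ => ⟨0, by omega⟩
    | .inr ⟨_+1, _⟩ => ⟨m+1, by omega⟩
  invFun i :=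
    if h : (i : ℕ) = 0 then .inr 0
    else if h2 : (i : ℕ) < m + 1 then .inl ⟨(i : ℕ) - 1, by omega⟩ else .inr 1
  left_inv x := by
    rcases x with j | ⟨(_ | r), hr⟩ <;> dsimp only
    · show (if h : ((j:ℕ)+1) = 0 then _ else if h2 : ((j:ℕ)+1) < m + 1 then _ else _) = _
      rw [dif_neg (by omega), dif_pos (by omega)]
      congr 1
    · rw [dif_pos rfl]
      rfl
    · show (if h : (m+1 : ℕ) = 0 then _ else if h2 : (m+1:ℕ) < m + 1 then _ else _) = _
      rw [dif_neg (by omega), dif_neg (by omega)]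
      have : r = 0 := by omega
      subst this
      rfl
  right_inv i := by
    rcases i with ⟨iv, hiv⟩
    dsimp only
    by_cases h : iv = 0
    · subst h
      rw [dif_pos rfl]
    · by_cases h2 : iv < m + 1
      · rw [dif_neg h, dif_pos h2]
        exact Fin.ext (by simp; omega)
      · rw [dif_neg h, dif_neg h2]
        exact Fin.ext (by simp; omega)

open Matrix

theorem stmt8aux (m : ℕ) (d : Fin (m+1) → ℂ) (b c : Fin m → ℂ) (β lam : ℂ)
    (hd : ∀ j : Fin m, d j.succ ≠ 0)
    {M : Matrix (Fin (m+2)) (Fin (m+2)) ℂ}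
    {N : Matrix (Fin (m+1)) (Fin (m+1)) ℂ}
    (hM : M.submatrix (stmt8e2 m) (stmt8e2 m) = fromBlocks
        (diagonal (fun j => d j.succ))
        (Matrix.of fun j s => if s = (1 : Fin 2) then c j else 0)
        (Matrix.of fun r j => if r = (0 : Fin 2) then b j else 0)
        !![d 0, 0; β, -β - lam])
    (hN : N.submatrix (stmt8e1 m) (stmt8e1 m) = fromBlocks
        (diagonal (fun j => d j.succ))
        (Matrix.of fun j _ => c j)
        (Matrix.of fun _ j => b j)
        (Matrix.of fun _ _ => d 0)) :
    det M = -(β * det N + lam * ∏ i, d i) := by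
  set dc : Fin m → ℂ := fun j => d j.succ with hdc
  have hinv : diagonal dc * diagonal (fun j => (dc j)⁻¹) = 1 := by
    ext i j
    by_cases h : i = j
    · subst h
      simp [diagonal_mul_diagonal, Matrix.diagonal_apply, Matrix.one_apply,
        mul_inv_cancel₀ (hd i)]
      exact mul_inv_cancel₀ (hd i)
    · simp [diagonal_mul_diagonal, Matrix.diagonal_apply, Matrix.one_apply, h]
  haveI : Invertible (diagonal dc) := invertibleOfRightInverse _ _ hinv
  have hIof : ⅟(diagonal dc) = diagonal (fun j => (dc j)⁻¹) := invOf_eq_right_inv hinv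
  set σ : ℂ := ∑ j, b j * (dc j)⁻¹ * c j with hσ
  have hdetM : det M = (∏ j, dc j) * (d 0 * (-β - lam) + β * σ) := by
    rw [← det_submatrix_equiv_self (stmt8e2 m), hM, det_fromBlocks₁₁, hIof, det_diagonal]
    congr 1
    have : (!![d 0, 0; β, -β - lam] -
        (Matrix.of fun r j => if r = (0 : Fin 2) then b j else 0) * diagonal (fun j => (dc j)⁻¹) *
          (Matrix.of fun j s => if s = (1 : Fin 2) then c j else 0)) =
        !![d 0, -σ; β, -β - lam] := by
      ext r s
      fin_cases r <;> fin_cases s <;>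
        simp [Matrix.mul_apply, Matrix.diagonal_apply, hσ, ite_mul, mul_ite, mul_zero, zero_mul,
          Finset.sum_ite_eq, Finset.sum_ite_eq']
    rw [this, det_fin_two_of]
    ring
  have hdetN : det N = (∏ j, dc j) * (d 0 - σ) := by
    rw [← det_submatrix_equiv_self (stmt8e1 m), hN, det_fromBlocks₁₁, hIof, det_diagonal]
    congr 1
    have : ((Matrix.of fun (_ : Fin 1) (_ : Fin 1) => d 0) -
        (Matrix.of fun _ j => b j) * diagonal (fun j => (dc j)⁻¹) *
          (Matrix.of fun j _ => c j)) =
        Matrix.of fun _ _ => d 0 - σ := by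
      ext r s
      simp [Matrix.mul_apply, Matrix.diagonal_apply, hσ, ite_mul, mul_ite, mul_zero, zero_mul,
        Finset.sum_ite_eq, Finset.sum_ite_eq']
    rw [this]
    rw [show det (Matrix.of fun (_ : Fin 1) (_ : Fin 1) => d 0 - σ) = d 0 - σ from det_fin_one _]
  have hprod : ∏ i, d i = d 0 * ∏ j, dc j := Fin.prod_univ_succ d
  rw [hdetM, hdetN, hprod]
  ring
open Matrix in
theorem stmt_8 (n : ℕ) (hn : 0 < n) (a : Fin n → Fin n → ℝ) (α : ℝ)
    (A : Matrix (Fin n) (Fin n) ℝ)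
    (hA : A = Matrix.of fun (i j : Fin n) =>
      if (i : ℕ) = 0 then a ⟨0, hn⟩ j
      else if (j : ℕ) = 0 then a i ⟨0, hn⟩
      else if i = j then a i i
      else 0)
    (Ad : Matrix (Fin (n+1)) (Fin (n+1)) ℝ)
    (hAd : Ad = Matrix.of fun (i j : Fin (n+1)) =>
      if hi : (i : ℕ) < n then
        if hj : (j : ℕ) < n then
          if (i : ℕ) = 0 then a ⟨0, hn⟩ ⟨j, hj⟩
          else if (i : ℕ) = (j : ℕ) then a ⟨i, hi⟩ ⟨i, hi⟩
          else 0
        else -- last column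
          if (i : ℕ) = 0 then 0 else a ⟨i, hi⟩ ⟨0, hn⟩
      else -- last row
        if (j : ℕ) = 0 then α else if (j : ℕ) < n then 0 else -α) :
    ∀ lam : ℂ,
      det (Ad.map (Complex.ofReal) - lam • (1 : Matrix (Fin (n+1)) (Fin (n+1)) ℂ)) =
      -((α : ℂ) * det (A.map (Complex.ofReal) - lam • (1 : Matrix (Fin n) (Fin n) ℂ)) +
        lam * ∏ i : Fin n, ((a i i : ℂ) - lam)) := by
  obtain ⟨m, rfl⟩ : ∃ m, n = m + 1 := ⟨n - 1, by omega⟩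
  intro lam
  subst hA hAd
  set f : ℂ → ℂ := fun z =>
    det ((Matrix.of fun (i j : Fin (m+1+1)) =>
      if hi : (i : ℕ) < m+1 then
        if hj : (j : ℕ) < m+1 then
          if (i : ℕ) = 0 then a ⟨0, hn⟩ ⟨j, hj⟩
          else if (i : ℕ) = (j : ℕ) then a ⟨i, hi⟩ ⟨i, hi⟩
          else 0
        else
          if (i : ℕ) = 0 then 0 else a ⟨i, hi⟩ ⟨0, hn⟩
      else
        if (j : ℕ) = 0 then α else if (j : ℕ) < m+1 then 0 else -α).map Complex.ofReal
      - z • (1 : Matrix (Fin (m+1+1)) (Fin (m+1+1)) ℂ)) with hf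
  set g : ℂ → ℂ := fun z =>
    -((α : ℂ) * det ((Matrix.of fun (i j : Fin (m+1)) =>
      if (i : ℕ) = 0 then a ⟨0, hn⟩ j
      else if (j : ℕ) = 0 then a i ⟨0, hn⟩
      else if i = j then a i i
      else 0).map Complex.ofReal - z • (1 : Matrix (Fin (m+1)) (Fin (m+1)) ℂ)) +
        z * ∏ i : Fin (m+1), ((a i i : ℂ) - z)) with hg
  show f lam = g lam
  have hfc : Continuous f := by
    apply Continuous.matrix_det
    exact continuous_const.sub (continuous_id.smul continuous_const)
  have hgc : Continuous g := by
    apply Continuous.neg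
    apply Continuous.add
    · exact continuous_const.mul
        ((continuous_const.sub (continuous_id.smul continuous_const)).matrix_det)
    · exact continuous_id.mul
        (continuous_finset_prod _ fun i _ => continuous_const.sub continuous_id)
  have hdense : Dense (Set.range (fun j : Fin m => ((a j.succ j.succ : ℝ) : ℂ)))ᶜ :=
    Set.Countable.dense_compl ℂ (Set.finite_range _).countable
  have heq : Set.EqOn f g (Set.range (fun j : Fin m => ((a j.succ j.succ : ℝ) : ℂ)))ᶜ := by
    intro z hz
    have hd : ∀ j : Fin m, ((a j.succ j.succ : ℝ) : ℂ) - z ≠ 0 := fun j hj0 =>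
      hz ⟨j, sub_eq_zero.mp hj0⟩
    show f z = g z
    simp only [hf, hg]
    refine stmt8aux m (fun i => ((a i i : ℝ) : ℂ) - z)
      (fun j => ((a ⟨0, hn⟩ j.succ : ℝ) : ℂ)) (fun j => ((a j.succ ⟨0, hn⟩ : ℝ) : ℂ))
      (α : ℂ) z hd ?_ ?_
    · -- M block identity
      ext x y
      rcases x with i | r <;> rcases y with j | s
      · -- core × core
        simp only [submatrix_apply, stmt8e2, Equiv.coe_fn_mk, fromBlocks_apply₁₁,
          Matrix.sub_apply, Matrix.map_apply, Matrix.of_apply, Matrix.smul_apply,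
          Matrix.one_apply, Matrix.diagonal_apply]
        rw [dif_pos (by omega), dif_pos (by omega), if_neg (by omega)]
        by_cases hij : i = j
        · subst hij
          rw [if_pos rfl, if_pos rfl, if_pos rfl]
          simp [Fin.succ]
        · rw [if_neg (by simpa [Fin.ext_iff] using hij),
            if_neg (by simp [Fin.ext_iff]; omega), if_neg hij]
          simp
      · -- core × border
        fin_cases s
        · simp only [submatrix_apply, stmt8e2, Equiv.coe_fn_mk, fromBlocks_apply₁₂,
            Matrix.sub_apply, Matrix.map_apply, Matrix.of_apply,
            Matrix.smul_apply, Matrix.one_apply]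
          rw [dif_pos (by omega), dif_pos (by omega), if_neg (by omega), if_neg (by omega),
            if_neg (by simp [Fin.ext_iff]), if_neg (by decide)]
          simp
        · simp only [submatrix_apply, stmt8e2, Equiv.coe_fn_mk, fromBlocks_apply₁₂,
            Matrix.sub_apply, Matrix.map_apply, Matrix.of_apply,
            Matrix.smul_apply, Matrix.one_apply]
          rw [dif_pos (by omega), dif_neg (by omega), if_neg (by omega),
            if_neg (by simp [Fin.ext_iff]; omega), if_pos (by decide)]
          simp [Fin.succ]
      · -- border × core
        fin_cases r
        · simp only [submatrix_apply, stmt8e2, Equiv.coe_fn_mk, fromBlocks_apply₂₁,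
            Matrix.sub_apply, Matrix.map_apply, Matrix.of_apply,
            Matrix.smul_apply, Matrix.one_apply]
          simp [Fin.ext_iff, Fin.succ]
        · simp only [submatrix_apply, stmt8e2, Equiv.coe_fn_mk, fromBlocks_apply₂₁,
            Matrix.sub_apply, Matrix.map_apply, Matrix.of_apply,
            Matrix.smul_apply, Matrix.one_apply]
          rw [dif_neg (by omega), if_neg (by omega), if_pos (by omega),
            if_neg (by simp [Fin.ext_iff]; omega), if_neg (by decide)]
          simp
      · -- border × border
        fin_cases r <;> fin_cases s <;>
          simp only [submatrix_apply, stmt8e2, Equiv.coe_fn_mk, fromBlocks_apply₂₂,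
            Matrix.sub_apply, Matrix.map_apply, Matrix.of_apply,
            Matrix.smul_apply, Matrix.one_apply]
        all_goals simp [Fin.ext_iff, Fin.mk_zero, Fin.mk_one]
    · -- N block identity
      ext x y
      rcases x with i | r <;> rcases y with j | s
      · simp only [submatrix_apply, stmt8e1, Equiv.coe_fn_mk, fromBlocks_apply₁₁,
          Matrix.sub_apply, Matrix.map_apply, Matrix.of_apply, Matrix.smul_apply,
          Matrix.one_apply, Matrix.diagonal_apply]
        rw [if_neg (by omega), if_neg (by omega)]
        by_cases hij : i = j
        · subst hij
          rw [if_pos (by simp [Fin.ext_iff]), if_pos rfl, if_pos rfl]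
          simp [Fin.succ]
        · rw [if_neg (by simp [Fin.ext_iff]; omega), if_neg (by simp [Fin.ext_iff]; omega),
            if_neg hij]
          simp
      · simp only [submatrix_apply, stmt8e1, Equiv.coe_fn_mk, fromBlocks_apply₁₂,
          Matrix.sub_apply, Matrix.map_apply, Matrix.of_apply, Matrix.smul_apply,
          Matrix.one_apply]
        simp [Fin.ext_iff, Fin.succ]
      · simp only [submatrix_apply, stmt8e1, Equiv.coe_fn_mk, fromBlocks_apply₂₁,
          Matrix.sub_apply, Matrix.map_apply, Matrix.of_apply, Matrix.smul_apply,
          Matrix.one_apply]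
        simp [Fin.ext_iff, Fin.succ]
      · simp only [submatrix_apply, stmt8e1, Equiv.coe_fn_mk, fromBlocks_apply₂₂,
          Matrix.sub_apply, Matrix.map_apply, Matrix.of_apply, Matrix.smul_apply,
          Matrix.one_apply]
        simp [Fin.ext_iff]
  exact congrFun (Continuous.ext_on hdense hfc hgc heq) lam
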